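/- arXiv:quant-ph/0407255 — 6 statements merged into one kernel-verified Lean document; each statement's English description precedes it below -/
import Mathlib

section
/- For every finite simple graph G and all vertices u, w ∈ V, the cluster-state stabilizer operators satisfy: K_u and K_w commute (K_u * K_w = K_w * K_u), each K_u is Hermitian (K_uᴴ = K_u), and each K_u squares to the identity (K_u * K_u = 1). -/
open Matrix

set_option linter.unusedSectionVars false

noncomputable section

namespace ClusterState


/-- The single-qubit Pauli `X` matrix. -/
def PX : Matrix (Fin 2) (Fin 2) ℂ := !![0, 1; 1, 0]

/-- The single-qubit Pauli `Z` matrix. -/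
def PZ : Matrix (Fin 2) (Fin 2) ℂ := !![1, 0; 0, -1]

variable {V : Type*} [Fintype V] [DecidableEq V]

/-- The one-qubit operator `M` acting on the tensor factor `u` of the
`|V|`-qubit space `(V → Fin 2)`, and the identity on all other factors. -/
def oneSite (u : V) (M : Matrix (Fin 2) (Fin 2) ℂ) :
    Matrix (V → Fin 2) (V → Fin 2) ℂ :=
  Matrix.of fun s t => if ∀ v, v ≠ u → s v = t v then M (s u) (t u) else 0

/-- Pauli `X` acting on tensor factor `u`. -/
def XAt (u : V) : Matrix (V → Fin 2) (V → Fin 2) ℂ := oneSite u PX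

/-- Pauli `Z` acting on tensor factor `u`. -/
def ZAt (u : V) : Matrix (V → Fin 2) (V → Fin 2) ℂ := oneSite u PZ

lemma fin2_cases : ∀ a : Fin 2, a = 0 ∨ a = 1 := by decide

lemma ZAt_eq_diagonal (u : V) :
    ZAt u = Matrix.diagonal fun s => if s u = 1 then (-1 : ℂ) else 1 := by
  funext s t
  simp only [ZAt, oneSite, Matrix.of_apply]
  by_cases hst : s = t
  · subst hst
    rw [Matrix.diagonal_apply_eq, if_pos fun v _ => rfl]
    rcases fin2_cases (s u) with h | h <;> rw [h] <;> norm_num [PZ]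
  · rw [Matrix.diagonal_apply_ne _ hst]
    by_cases h : ∀ v, v ≠ u → s v = t v
    · rw [if_pos h]
      have hsu : s u ≠ t u := by
        intro he
        exact hst (funext fun v => by
          by_cases hv : v = u
          · rw [hv]; exact he
          · exact h v hv)
      rcases fin2_cases (s u) with h1 | h1 <;> rcases fin2_cases (t u) with h2 | h2
      · exact absurd (h1.trans h2.symm) hsu
      · rw [h1, h2]; norm_num [PZ]
      · rw [h1, h2]; norm_num [PZ]
      · exact absurd (h1.trans h2.symm) hsu
    · rw [if_neg h]

lemma ZAt_commute (u w : V) : Commute (ZAt u) (ZAt w) := by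
  have : ZAt u * ZAt w = ZAt w * ZAt u := by
    rw [ZAt_eq_diagonal, ZAt_eq_diagonal, Matrix.diagonal_mul_diagonal,
      Matrix.diagonal_mul_diagonal]
    exact congrArg Matrix.diagonal (mul_comm _ _)
  exact this

/-- The product `∏_{u ∈ S} Z_u` of Pauli `Z` operators over a finite set of
sites (all factors commute). -/
def Zprod (S : Finset V) : Matrix (V → Fin 2) (V → Fin 2) ℂ :=
  S.noncommProd ZAt fun u _ w _ _ => ZAt_commute u w

/-- Flip the bit at site `u`. -/
def flip (u : V) (s : V → Fin 2) : V → Fin 2 := Function.update s u (s u + 1)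

lemma flip_apply_same (u : V) (s : V → Fin 2) : flip u s u = s u + 1 := by
  unfold flip; exact Function.update_self u (s u + 1) s

lemma flip_apply_ne (u v : V) (s : V → Fin 2) (h : v ≠ u) : flip u s v = s v := by
  unfold flip; exact Function.update_of_ne h (s u + 1) s

lemma XAt_apply (u : V) (s t : V → Fin 2) :
    XAt u s t = if t = flip u s then 1 else 0 := by
  simp only [XAt, oneSite, Matrix.of_apply]
  by_cases ht : t = flip u s
  · have hcond : ∀ v, v ≠ u → s v = t v := fun v hv => by
      rw [ht, flip_apply_ne u v s hv]
    rw [if_pos hcond, if_pos ht, ht, flip_apply_same]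
    rcases fin2_cases (s u) with h | h <;> rw [h]
    · have e : (0 : Fin 2) + 1 = 1 := rfl
      rw [e]; norm_num [PX]
    · have e : (1 : Fin 2) + 1 = 0 := rfl
      rw [e]; norm_num [PX]
  · rw [if_neg ht]
    by_cases h : ∀ v, v ≠ u → s v = t v
    · rw [if_pos h]
      have htu : t u ≠ s u + 1 := by
        intro he
        apply ht
        funext v
        by_cases hv : v = u
        · rw [hv, he, flip_apply_same]
        · rw [flip_apply_ne u v s hv]; exact (h v hv).symm
      have hts : t u = s u := by
        have key : ∀ a b : Fin 2, b ≠ a + 1 → b = a := by decide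
        exact key (s u) (t u) htu
      rw [hts]
      rcases fin2_cases (s u) with h1 | h1 <;> rw [h1] <;> norm_num [PX]
    · rw [if_neg h]

lemma XAt_mul_apply (u : V) (A : Matrix (V → Fin 2) (V → Fin 2) ℂ)
    (s t : V → Fin 2) : (XAt u * A) s t = A (flip u s) t := by
  rw [Matrix.mul_apply, Finset.sum_eq_single (flip u s)]
  · rw [XAt_apply, if_pos rfl, one_mul]
  · intro r _ hr
    rw [XAt_apply, if_neg hr, zero_mul]
  · intro h; exact absurd (Finset.mem_univ _) h

lemma flip_flip (u : V) (s : V → Fin 2) : flip u (flip u s) = s := by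
  funext v
  by_cases hv : v = u
  · rw [hv, flip_apply_same, flip_apply_same]
    have key : ∀ a : Fin 2, a + 1 + 1 = a := by decide
    exact key (s u)
  · rw [flip_apply_ne _ _ _ hv, flip_apply_ne _ _ _ hv]

lemma mul_XAt_apply (u : V) (A : Matrix (V → Fin 2) (V → Fin 2) ℂ)
    (s t : V → Fin 2) : (A * XAt u) s t = A s (flip u t) := by
  rw [Matrix.mul_apply, Finset.sum_eq_single (flip u t)]
  · rw [XAt_apply, if_pos (flip_flip u t).symm, mul_one]
  · intro r _ hr
    rw [XAt_apply, if_neg, mul_zero]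
    intro he
    exact hr (by rw [he, flip_flip])
  · intro h; exact absurd (Finset.mem_univ _) h

lemma flip_comm (u w : V) (s : V → Fin 2) :
    flip u (flip w s) = flip w (flip u s) := by
  rcases eq_or_ne u w with rfl | h
  · rfl
  · funext v
    by_cases hu : v = u
    · rw [hu, flip_apply_same, flip_apply_ne w u s h,
        flip_apply_ne w u (flip u s) h, flip_apply_same]
    · by_cases hw : v = w
      · rw [hw, flip_apply_ne u w (flip w s) (Ne.symm h), flip_apply_same,
          flip_apply_same, flip_apply_ne u w s (Ne.symm h)]
      · rw [flip_apply_ne u v (flip w s) hu, flip_apply_ne w v s hw,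
          flip_apply_ne w v (flip u s) hw, flip_apply_ne u v s hu]

lemma XAt_commute (u w : V) : Commute (XAt u) (XAt w) := by
  have : XAt u * XAt w = XAt w * XAt u := by
    funext s t
    rw [XAt_mul_apply, XAt_mul_apply, XAt_apply, XAt_apply, flip_comm w u s]
  exact this

/-- The product `∏_{u ∈ S} X_u` of Pauli `X` operators over a finite set of
sites (all factors commute). -/
def Xprod (S : Finset V) : Matrix (V → Fin 2) (V → Fin 2) ℂ :=
  S.noncommProd XAt fun u _ w _ _ => XAt_commute u w

/-- The cluster-state stabilizer operator `K_u = X_u * ∏_{v ∈ N(u)} Z_v`. -/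
def K (G : SimpleGraph V) [DecidableRel G.Adj] (u : V) :
    Matrix (V → Fin 2) (V → Fin 2) ℂ :=
  XAt u * Zprod (G.neighborFinset u)

/-- Product of a family of pairwise commuting elements over a finite set. -/
def cprod {α M : Type*} [Monoid M] (S : Finset α) (f : α → M)
    (h : ∀ u ∈ S, ∀ w ∈ S, Commute (f u) (f w)) : M :=
  S.noncommProd f fun u hu w hw _ => h u hu w hw


/-- The sign `∏_{v ∈ S} (-1)^{s v}`. -/
def eps (S : Finset V) (s : V → Fin 2) : ℂ :=
  ∏ v ∈ S, if s v = 1 then (-1 : ℂ) else 1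

lemma Zprod_eq_diagonal (S : Finset V) :
    Zprod S = Matrix.diagonal (eps S) := by
  classical
  induction S using Finset.induction_on with
  | empty =>
      have he : eps (∅ : Finset V) = fun _ => 1 := by funext s; simp [eps]
      rw [show Zprod (∅ : Finset V) = 1 from Finset.noncommProd_empty _ _, he, Matrix.diagonal_one]
  | @insert a S ha ih =>
      rw [show Zprod (insert a S) = ZAt a * S.noncommProd ZAt (fun u _ w _ _ => ZAt_commute u w) from
        Finset.noncommProd_insert_of_notMem _ _ _ _ ha]
      have : S.noncommProd ZAt (fun u _ w _ _ => ZAt_commute u w) = Zprod S := rfl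
      have he : (fun s => (if s a = 1 then (-1:ℂ) else 1) * eps S s)
          = eps (insert a S) := by
        funext s; simp [eps, Finset.prod_insert ha]
      rw [this, ih, ZAt_eq_diagonal, Matrix.diagonal_mul_diagonal, he]

lemma eps_flip_of_not_mem (S : Finset V) (u : V) (hu : u ∉ S) (s : V → Fin 2) :
    eps S (flip u s) = eps S s := by
  unfold eps
  refine Finset.prod_congr rfl fun v hv => ?_
  rw [flip_apply_ne u v s (by rintro rfl; exact hu hv)]

lemma eps_sq (S : Finset V) (s : V → Fin 2) : eps S s * eps S s = 1 := by
  unfold eps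
  rw [← Finset.prod_mul_distrib]
  refine Finset.prod_eq_one fun v _ => ?_
  by_cases h : s v = 1 <;> simp [h]

lemma eps_star (S : Finset V) (s : V → Fin 2) : star (eps S s) = eps S s := by
  unfold eps
  rw [star_prod]
  refine Finset.prod_congr rfl fun v _ => ?_
  by_cases h : s v = 1 <;> simp [h]

lemma eps_flip (S : Finset V) (u : V) (s : V → Fin 2) :
    eps S (flip u s) = (if u ∈ S then (-1 : ℂ) else 1) * eps S s := by
  by_cases hu : u ∈ S
  · rw [if_pos hu]
    unfold eps
    rw [← Finset.prod_erase_mul _ _ hu, ← Finset.prod_erase_mul _ _ hu]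
    have h1 : ∏ v ∈ S.erase u, (if flip u s v = 1 then (-1:ℂ) else 1)
        = ∏ v ∈ S.erase u, (if s v = 1 then (-1:ℂ) else 1) := by
      refine Finset.prod_congr rfl fun v hv => ?_
      rw [flip_apply_ne u v s (Finset.ne_of_mem_erase hv)]
    rw [h1, flip_apply_same]
    rcases fin2_cases (s u) with h | h <;> rw [h]
    · have e : (0 : Fin 2) + 1 = 1 := rfl
      rw [e]; simp
    · have e : (1 : Fin 2) + 1 = 0 := rfl
      rw [e]; simp
  · rw [if_neg hu, one_mul, eps_flip_of_not_mem S u hu]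

lemma K_apply (G : SimpleGraph V) [DecidableRel G.Adj] (u : V)
    (s t : V → Fin 2) :
    K G u s t = if t = flip u s then eps (G.neighborFinset u) s else 0 := by
  rw [K, XAt_mul_apply, Zprod_eq_diagonal]
  have hu : u ∉ G.neighborFinset u := by
    simp [SimpleGraph.mem_neighborFinset]
  by_cases ht : t = flip u s
  · rw [if_pos ht, ht, Matrix.diagonal_apply_eq, eps_flip_of_not_mem _ u hu]
  · rw [if_neg ht, Matrix.diagonal_apply_ne _ (fun h => ht h.symm)]

lemma K_mul_apply (G : SimpleGraph V) [DecidableRel G.Adj] (u : V)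
    (A : Matrix (V → Fin 2) (V → Fin 2) ℂ) (s t : V → Fin 2) :
    (K G u * A) s t = eps (G.neighborFinset u) s * A (flip u s) t := by
  rw [Matrix.mul_apply, Finset.sum_eq_single (flip u s)]
  · rw [K_apply, if_pos rfl]
  · intro r _ hr
    rw [K_apply, if_neg hr, zero_mul]
  · intro h; exact absurd (Finset.mem_univ _) h

/-- the cluster-state stabilizers `K_u` pairwise commute, are
Hermitian, and square to the identity. -/
theorem cluster_stabilizers_commute_hermitian_involutive
    {V : Type*} [Fintype V] [DecidableEq V]
    (G : SimpleGraph V) [DecidableRel G.Adj] (u w : V) :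
    K G u * K G w = K G w * K G u ∧ (K G u)ᴴ = K G u ∧ K G u * K G u = 1 := by
  refine ⟨?_, ?_, ?_⟩
  · funext s t
    rw [K_mul_apply, K_mul_apply, K_apply, K_apply, flip_comm w u s]
    by_cases ht : t = flip u (flip w s)
    · rw [if_pos ht, if_pos ht]
      rw [eps_flip _ u, eps_flip _ w]
      have hsym : (if u ∈ G.neighborFinset w then (-1:ℂ) else 1)
          = (if w ∈ G.neighborFinset u then (-1:ℂ) else 1) := by
        simp only [SimpleGraph.mem_neighborFinset]
        by_cases h : G.Adj u w
        · rw [if_pos h.symm, if_pos h]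
        · rw [if_neg (fun h' => h h'.symm), if_neg h]
      rw [hsym]; ring
    · rw [if_neg ht, if_neg ht, mul_zero, mul_zero]
  · funext s t
    rw [Matrix.conjTranspose_apply, K_apply, K_apply]
    by_cases ht : t = flip u s
    · have hs : s = flip u t := by rw [ht, flip_flip]
      rw [if_pos hs, if_pos ht, ht,
        eps_flip_of_not_mem _ u (by simp [SimpleGraph.mem_neighborFinset]) s,
        eps_star]
    · have hs : s ≠ flip u t := by
        intro h
        exact ht (by rw [h, flip_flip])
      rw [if_neg hs, if_neg ht, star_zero]
  · funext s t
    rw [K_mul_apply, K_apply, flip_flip]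
    by_cases ht : t = s
    · rw [if_pos ht, ht, Matrix.one_apply_eq,
        eps_flip_of_not_mem _ u (by simp [SimpleGraph.mem_neighborFinset]) s,
        eps_sq]
    · rw [if_neg ht, mul_zero, Matrix.one_apply_ne (fun h => ht h.symm)]

end ClusterState
end
end

section
/- For every finite simple graph G and every subset S ⊆ V, the product of cluster-state stabilizers over S equals a signed Pauli word: ∏_{u ∈ S} K_u = (−1)^{e(S)} · (∏_{u ∈ S} X_u) * (∏_{v ∈ V, |N(v) ∩ S| odd} Z_v), where e(S) is the number of edges of G with both endpoints in S. (All factors within each of the three products commute, so the products are well defined.) -/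
open Matrix

set_option linter.unusedSectionVars false

noncomputable section

namespace ClusterState


variable {V : Type*} [Fintype V] [DecidableEq V]

/-! ### Auxiliary machinery for the main theorem -/

/-- Sign character on `ZMod 2`. -/
def chi (x : ZMod 2) : ℂ := if x = 0 then 1 else -1

lemma zmod2_cases (a : ZMod 2) : a = 0 ∨ a = 1 := by revert a; decide

lemma chi_add (a b : ZMod 2) : chi (a + b) = chi a * chi b := by
  rcases zmod2_cases a with rfl | rfl <;> rcases zmod2_cases b with rfl | rfl <;>
    norm_num [chi] <;> decide

lemma neg_one_pow_eq_chi (n : ℕ) : (-1 : ℂ) ^ n = chi (n : ZMod 2) := by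
  induction n with
  | zero => simp [chi]
  | succ k ih =>
    rw [pow_succ, ih, Nat.cast_succ, chi_add]
    norm_num [chi]

/-- The bit of a `Fin 2` value, as an element of `ZMod 2`. -/
def bit1Z (a : Fin 2) : ZMod 2 := if a = 1 then 1 else 0

lemma bit1Z_succ : ∀ a : Fin 2, bit1Z (a + 1) = bit1Z a + 1 := by decide

lemma natCast_zmod2 (n : ℕ) : (n : ZMod 2) = if Odd n then 1 else 0 := by
  induction n with
  | zero => simp
  | succ k ih =>
    rw [Nat.cast_succ, ih]
    by_cases h : Odd k
    · rw [if_pos h, if_neg fun hc => (Nat.odd_add_one.mp hc) h]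
      decide
    · rw [if_neg h, if_pos (Nat.odd_add_one.mpr h)]
      decide

/-- Flip the bits at all sites in `A`. -/
def flipS (A : Finset V) (s : V → Fin 2) : V → Fin 2 :=
  fun v => if v ∈ A then s v + 1 else s v

lemma flipS_empty (s : V → Fin 2) : flipS (∅ : Finset V) s = s := by
  funext v; simp [flipS]

lemma flipS_singleton (u : V) (s : V → Fin 2) : flipS {u} s = flip u s := by
  funext v
  by_cases hv : v = u
  · subst hv; simp [flipS, flip_apply_same]
  · simp [flipS, hv, flip_apply_ne u v s hv]

lemma flipS_flipS {A B : Finset V} (h : Disjoint A B) (s : V → Fin 2) :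
    flipS B (flipS A s) = flipS (A ∪ B) s := by
  funext v
  by_cases hA : v ∈ A
  · have hB : v ∉ B := fun hB => (Finset.disjoint_left.mp h hA) hB
    simp [flipS, hA, hB]
  · by_cases hB : v ∈ B <;> simp [flipS, hA, hB]

/-- A "signed flip" matrix: it maps the basis state `s` to `f s` times the
basis state obtained from `s` by flipping the bits in `A`. -/
def W (A : Finset V) (f : (V → Fin 2) → ℂ) : Matrix (V → Fin 2) (V → Fin 2) ℂ :=
  Matrix.of fun s t => if t = flipS A s then f s else 0

lemma W_mul {A B : Finset V} (h : Disjoint A B) (f g : (V → Fin 2) → ℂ) :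
    W A f * W B g = W (A ∪ B) fun s => f s * g (flipS A s) := by
  funext s t
  rw [Matrix.mul_apply, Finset.sum_eq_single (flipS A s)]
  · show (if flipS A s = flipS A s then f s else 0) *
        (if t = flipS B (flipS A s) then g (flipS A s) else 0) = _
    rw [if_pos rfl, flipS_flipS h]
    simp only [W, Matrix.of_apply, mul_ite, mul_zero]
  · intro r _ hr
    show (if r = flipS A s then f s else 0) * _ = 0
    rw [if_neg hr, zero_mul]
  · intro hmem; exact absurd (Finset.mem_univ _) hmem

lemma W_one : W (∅ : Finset V) (fun _ => 1) = 1 := by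
  funext s t
  simp [W, flipS_empty, Matrix.one_apply, eq_comm]

lemma smul_W (c : ℂ) (A : Finset V) (f : (V → Fin 2) → ℂ) :
    c • W A f = W A fun s => c * f s := by
  funext s t
  simp [W, Matrix.smul_apply, mul_ite, mul_zero]

lemma W_congr {A : Finset V} {f g : (V → Fin 2) → ℂ} (h : ∀ s, f s = g s) :
    W A f = W A g := by
  funext s t
  simp only [W, Matrix.of_apply]
  rw [h s]

lemma XAt_eq_W (u : V) : XAt u = W {u} fun _ => 1 := by
  funext s t
  rw [XAt_apply]
  simp [W, flipS_singleton]

lemma ZAt_eq_W (u : V) : ZAt u = W ∅ fun s => chi (bit1Z (s u)) := by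
  funext s t
  rw [ZAt_eq_diagonal]
  by_cases hst : s = t
  · subst hst
    simp only [Matrix.diagonal_apply_eq, W, Matrix.of_apply, flipS_empty, if_pos rfl]
    by_cases h : s u = 1 <;> simp [chi, bit1Z, h]
  · rw [Matrix.diagonal_apply_ne _ hst]
    simp [W, flipS_empty, Ne.symm hst]

lemma Zprod_eq_W (B : Finset V) :
    Zprod B = W ∅ fun s => chi (∑ v ∈ B, bit1Z (s v)) := by
  induction B using Finset.induction_on with
  | empty => simp [Zprod, Finset.noncommProd_empty, chi, W_one]; exact Finset.noncommProd_empty _ _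
  | @insert u B hu ih =>
    have : Zprod (insert u B) = ZAt u * Zprod B := by
      unfold Zprod
      exact Finset.noncommProd_insert_of_notMem _ _ _ _ hu
    rw [this, ih, ZAt_eq_W, W_mul (Finset.disjoint_empty_left _)]
    funext s t
    simp only [W, Matrix.of_apply, Finset.empty_union, flipS_empty, ← chi_add,
      Finset.sum_insert hu]

lemma Xprod_eq_W (S : Finset V) : Xprod S = W S fun _ => 1 := by
  induction S using Finset.induction_on with
  | empty => simp [Xprod, Finset.noncommProd_empty, W_one]; exact Finset.noncommProd_empty _ _
  | @insert u S hu ih =>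
    have h1 : Xprod (insert u S) = XAt u * Xprod S := by
      unfold Xprod
      exact Finset.noncommProd_insert_of_notMem _ _ _ _ hu
    have hd : Disjoint ({u} : Finset V) S := Finset.disjoint_singleton_left.mpr hu
    rw [h1, ih, XAt_eq_W, W_mul hd, (Finset.insert_eq u S).symm]
    funext s t
    simp [W]

lemma K_eq_W (G : SimpleGraph V) [DecidableRel G.Adj] (u : V) :
    K G u = W {u} fun s => chi (∑ v ∈ G.neighborFinset u, bit1Z (s v)) := by
  unfold K
  rw [XAt_eq_W, Zprod_eq_W, W_mul (Finset.disjoint_empty_right _), Finset.union_empty]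
  refine W_congr fun s => ?_
  rw [one_mul]
  congr 1
  refine Finset.sum_congr rfl fun v hv => ?_
  have hvu : v ≠ u := (G.mem_neighborFinset u v |>.mp hv).ne'
  simp [flipS, Finset.mem_singleton, hvu]

lemma handshake (G : SimpleGraph V) [DecidableRel G.Adj] (S : Finset V) :
    ∑ v ∈ S, ((G.neighborFinset v ∩ S).card : ZMod 2) = 0 := by
  have h1 : ∀ v, ((G.neighborFinset v ∩ S).card : ZMod 2)
      = ∑ w ∈ S, (if G.Adj v w then (1 : ZMod 2) else 0) := by
    intro v
    have : G.neighborFinset v ∩ S = S.filter fun w => G.Adj v w := by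
      ext w
      simp [Finset.mem_inter, Finset.mem_filter, SimpleGraph.mem_neighborFinset, and_comm]
    rw [this, Finset.card_filter]
    push_cast
    rfl
  rw [Finset.sum_congr rfl fun v _ => h1 v, ← Finset.sum_product']
  refine Finset.sum_involution (fun p _ => (p.2, p.1)) ?_ ?_ ?_ ?_
  · intro p _
    simp only [G.adj_comm p.2 p.1]
    rcases em (G.Adj p.1 p.2) with h | h <;> simp [h]
    decide
  · intro p hp hf
    have hadj : G.Adj p.1 p.2 := by
      by_contra h; exact hf (by simp [h])
    intro he
    have : p.2 = p.1 := congrArg Prod.fst he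
    exact G.irrefl (this ▸ hadj)
  · intro p hp
    rw [Finset.mem_product] at hp ⊢
    exact ⟨hp.2, hp.1⟩
  · intro p _; rfl

lemma edgeCount_insert (G : SimpleGraph V) [DecidableRel G.Adj] {u : V} {S : Finset V}
    (hu : u ∉ S) :
    (G.edgeFinset.filter fun e => e ∈ (insert u S).sym2).card
      = (G.edgeFinset.filter fun e => e ∈ S.sym2).card
        + (G.neighborFinset u ∩ S).card := by
  classical
  have hsub : ∀ e : Sym2 V, e ∈ S.sym2 → e ∈ (insert u S).sym2 := by
    intro e he
    rw [Finset.mem_sym2_iff] at he ⊢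
    exact fun a ha => Finset.mem_insert_of_mem (he a ha)
  have hsplit :
      (G.edgeFinset.filter fun e => e ∈ (insert u S).sym2)
        = (G.edgeFinset.filter fun e => e ∈ S.sym2)
          ∪ (G.edgeFinset.filter fun e => e ∈ (insert u S).sym2 ∧ e ∉ S.sym2) := by
    ext e
    simp only [Finset.mem_union, Finset.mem_filter]
    constructor
    · rintro ⟨he, h1⟩
      by_cases h2 : e ∈ S.sym2
      · exact Or.inl ⟨he, h2⟩
      · exact Or.inr ⟨he, h1, h2⟩
    · rintro (⟨he, h2⟩ | ⟨he, h1, _⟩)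
      · exact ⟨he, hsub e h2⟩
      · exact ⟨he, h1⟩
  have hdisj : Disjoint (G.edgeFinset.filter fun e => e ∈ S.sym2)
      (G.edgeFinset.filter fun e => e ∈ (insert u S).sym2 ∧ e ∉ S.sym2) := by
    rw [Finset.disjoint_left]
    intro e h1 h2
    rw [Finset.mem_filter] at h1 h2
    exact h2.2.2 h1.2
  rw [hsplit, Finset.card_union_of_disjoint hdisj]
  congr 1
  rw [eq_comm]
  refine Finset.card_bij (fun w _ => s(u, w)) ?_ ?_ ?_
  · intro w hw
    rw [Finset.mem_inter, SimpleGraph.mem_neighborFinset] at hw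
    rw [Finset.mem_filter]
    refine ⟨SimpleGraph.mem_edgeFinset.mpr hw.1, ?_, ?_⟩
    · rw [Finset.mem_sym2_iff]
      intro a ha
      rw [Sym2.mem_iff] at ha
      rcases ha with rfl | rfl
      · exact Finset.mem_insert_self _ _
      · exact Finset.mem_insert_of_mem hw.2
    · rw [Finset.mem_sym2_iff]
      push_neg
      exact ⟨u, Sym2.mem_mk_left u w, hu⟩
  · intro w1 hw1 w2 hw2 heq
    rw [Finset.mem_inter, SimpleGraph.mem_neighborFinset] at hw1 hw2
    rw [Sym2.eq_iff] at heq
    rcases heq with ⟨_, h⟩ | ⟨h1, h2⟩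
    · exact h
    · exact h2.trans h1
  · intro e he
    rw [Finset.mem_filter] at he
    obtain ⟨he1, he2, he3⟩ := he
    induction e using Sym2.ind with
    | _ a b =>
      have hadj : G.Adj a b := SimpleGraph.mem_edgeFinset.mp he1
      rw [Finset.mem_sym2_iff] at he2
      have ha : a ∈ insert u S := he2 a (Sym2.mem_mk_left a b)
      have hb : b ∈ insert u S := he2 b (Sym2.mem_mk_right a b)
      have hnot : a = u ∨ b = u := by
        by_contra hcon
        push_neg at hcon
        apply he3
        rw [Finset.mem_sym2_iff]
        intro c hc
        rw [Sym2.mem_iff] at hc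
        rcases hc with rfl | rfl
        · exact (Finset.mem_insert.mp ha).resolve_left hcon.1
        · exact (Finset.mem_insert.mp hb).resolve_left hcon.2
      rcases hnot with rfl | rfl
      · have hbS : b ∈ S := by
          rcases Finset.mem_insert.mp hb with rfl | h
          · exact absurd rfl hadj.ne
          · exact h
        exact ⟨b, Finset.mem_inter.mpr ⟨(G.mem_neighborFinset a b).mpr hadj, hbS⟩, rfl⟩
      · have haS : a ∈ S := by
          rcases Finset.mem_insert.mp ha with rfl | h
          · exact absurd rfl hadj.ne'
          · exact h
        exact ⟨a, Finset.mem_inter.mpr ⟨(G.mem_neighborFinset b a).mpr hadj.symm, haS⟩,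
          Sym2.eq_swap⟩

lemma cprod_eq_W (G : SimpleGraph V) [DecidableRel G.Adj] (S : Finset V)
    (hK : ∀ u ∈ S, ∀ w ∈ S, Commute (K G u) (K G w)) :
    cprod S (K G) hK
      = W S fun s =>
          chi ((((G.edgeFinset.filter fun e => e ∈ S.sym2).card : ZMod 2))
            + ∑ v : V, ((G.neighborFinset v ∩ S).card : ZMod 2) * bit1Z (s v)) := by
  induction S using Finset.induction_on with
  | empty =>
    simp only [cprod, Finset.noncommProd_empty]
    rw [eq_comm]
    have : ∀ s : V → Fin 2,
        chi ((((G.edgeFinset.filter fun e => e ∈ (∅ : Finset V).sym2).card : ZMod 2))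
          + ∑ v : V, ((G.neighborFinset v ∩ (∅ : Finset V)).card : ZMod 2) * bit1Z (s v))
        = 1 := by
      intro s
      simp [chi]
    calc W (∅ : Finset V) _ = W (∅ : Finset V) (fun _ => 1) := by
          funext s t; simp only [W, Matrix.of_apply]; rw [this s]
      _ = 1 := W_one
  | @insert u S hu ih =>
    have hK' : ∀ a ∈ S, ∀ w ∈ S, Commute (K G a) (K G w) := fun a ha w hw =>
      hK a (Finset.mem_insert_of_mem ha) w (Finset.mem_insert_of_mem hw)
    have h1 : cprod (insert u S) (K G) hK = K G u * cprod S (K G) hK' := by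
      unfold cprod
      exact Finset.noncommProd_insert_of_notMem _ _ _ _ hu
    rw [h1, ih hK', K_eq_W, W_mul (Finset.disjoint_singleton_left.mpr hu),
      (Finset.insert_eq u S).symm]
    refine W_congr fun s => ?_
    rw [← chi_add]
    congr 1
    have hflip : ∀ v : V, bit1Z (flipS {u} s v) = bit1Z (s v) + (if v = u then 1 else 0) := by
      intro v
      by_cases hv : v = u
      · subst hv; simp [flipS, bit1Z_succ]
      · simp [flipS, hv]
    have hdeg : ∀ v : V, ((G.neighborFinset v ∩ insert u S).card : ZMod 2)
        = ((G.neighborFinset v ∩ S).card : ZMod 2)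
          + (if v ∈ G.neighborFinset u then 1 else 0) := by
      intro v
      by_cases hv : u ∈ G.neighborFinset v
      · have hvu : v ∈ G.neighborFinset u := by
          rw [SimpleGraph.mem_neighborFinset] at hv ⊢; exact hv.symm
        have : G.neighborFinset v ∩ insert u S = insert u (G.neighborFinset v ∩ S) := by
          ext w
          simp only [Finset.mem_inter, Finset.mem_insert]
          constructor
          · rintro ⟨hm, rfl | hm2⟩
            · exact Or.inl rfl
            · exact Or.inr ⟨hm, hm2⟩
          · rintro (rfl | ⟨hm, hm2⟩)
            · exact ⟨hv, Or.inl rfl⟩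
            · exact ⟨hm, Or.inr hm2⟩
        rw [this, Finset.card_insert_of_notMem (fun hc => hu (Finset.mem_inter.mp hc).2),
          if_pos hvu]
        push_cast
        ring
      · have hvu : v ∉ G.neighborFinset u := by
          rw [SimpleGraph.mem_neighborFinset] at hv ⊢
          exact fun hc => hv hc.symm
        have : G.neighborFinset v ∩ insert u S = G.neighborFinset v ∩ S := by
          ext w
          simp only [Finset.mem_inter, Finset.mem_insert]
          constructor
          · rintro ⟨hm, rfl | hm2⟩
            · exact absurd hm hv
            · exact ⟨hm, hm2⟩
          · rintro ⟨hm, hm2⟩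
            exact ⟨hm, Or.inr hm2⟩
        rw [this, if_neg hvu, add_zero]
    have hedge := edgeCount_insert G (S := S) hu
    have e1 : ∑ v : V, ((G.neighborFinset v ∩ S).card : ZMod 2) * bit1Z (flipS {u} s v)
        = (∑ v : V, ((G.neighborFinset v ∩ S).card : ZMod 2) * bit1Z (s v))
          + ((G.neighborFinset u ∩ S).card : ZMod 2) := by
      simp only [hflip, mul_add, Finset.sum_add_distrib, mul_ite, mul_one, mul_zero]
      rw [Finset.sum_ite_eq' Finset.univ u
        (fun v => ((G.neighborFinset v ∩ S).card : ZMod 2))]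
      simp
    have e2 : ∑ v : V, ((G.neighborFinset v ∩ insert u S).card : ZMod 2) * bit1Z (s v)
        = (∑ v : V, ((G.neighborFinset v ∩ S).card : ZMod 2) * bit1Z (s v))
          + ∑ v ∈ G.neighborFinset u, bit1Z (s v) := by
      simp only [hdeg, add_mul, Finset.sum_add_distrib, ite_mul, one_mul, zero_mul]
      congr 1
      rw [Finset.sum_ite_mem, Finset.univ_inter]
    rw [hedge, e2, e1]
    push_cast
    ring

/-- the product of cluster-state stabilizers over `S ⊆ V` equals the
signed Pauli word
`∏_{u ∈ S} K_u = (−1)^{e(S)} (∏_{u ∈ S} X_u) (∏_{v : |N(v) ∩ S| odd} Z_v)`,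
where `e(S)` is the number of edges of `G` with both endpoints in `S`. -/
theorem prod_cluster_stabilizers_eq_signed_pauli_word
    {V : Type*} [Fintype V] [DecidableEq V]
    (G : SimpleGraph V) [DecidableRel G.Adj] (S : Finset V)
    (hK : ∀ u ∈ S, ∀ w ∈ S, Commute (K G u) (K G w)) :
    cprod S (K G) hK
      = ((-1 : ℂ) ^ (G.edgeFinset.filter fun e => e ∈ S.sym2).card) •
          (Xprod S *
            Zprod (Finset.univ.filter fun v => Odd ((G.neighborFinset v ∩ S).card))) := by
  classical
  rw [cprod_eq_W, Xprod_eq_W, Zprod_eq_W, W_mul (Finset.disjoint_empty_right _), Finset.union_empty,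
    neg_one_pow_eq_chi, smul_W]
  refine W_congr fun s => ?_
  rw [one_mul, ← chi_add]
  congr 1
  have hhs : ((S.filter fun v => Odd ((G.neighborFinset v ∩ S).card)).card : ZMod 2) = 0 := by
    have h := handshake G S
    have h2 : ∑ v ∈ S, ((G.neighborFinset v ∩ S).card : ZMod 2)
        = ∑ v ∈ S, if Odd ((G.neighborFinset v ∩ S).card) then (1 : ZMod 2) else 0 :=
      Finset.sum_congr rfl fun v _ => natCast_zmod2 _
    rw [h2, Finset.sum_boole] at h
    exact h
  have hflipS : ∀ v : V, bit1Z (flipS S s v)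
      = bit1Z (s v) + (if v ∈ S then 1 else 0) := by
    intro v
    by_cases hv : v ∈ S <;> simp [flipS, hv, bit1Z_succ]
  have hfilter : ((Finset.univ.filter fun v =>
        Odd ((G.neighborFinset v ∩ S).card)).filter fun v => v ∈ S)
      = S.filter fun v => Odd ((G.neighborFinset v ∩ S).card) := by
    ext v
    simp only [Finset.mem_filter, Finset.mem_univ, true_and]
    exact and_comm
  have hRHS : ∑ v ∈ Finset.univ.filter (fun v => Odd ((G.neighborFinset v ∩ S).card)),
      bit1Z (flipS S s v)
      = ∑ v ∈ Finset.univ.filter (fun v => Odd ((G.neighborFinset v ∩ S).card)),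
        bit1Z (s v) := by
    have h2 : ∑ v ∈ Finset.univ.filter (fun v => Odd ((G.neighborFinset v ∩ S).card)),
        bit1Z (flipS S s v)
        = ∑ v ∈ Finset.univ.filter (fun v => Odd ((G.neighborFinset v ∩ S).card)),
          (bit1Z (s v) + if v ∈ S then 1 else 0) :=
      Finset.sum_congr rfl fun v _ => hflipS v
    rw [h2, Finset.sum_add_distrib, Finset.sum_boole, hfilter, hhs, add_zero]
  rw [hRHS]
  have hL : ∑ v : V, ((G.neighborFinset v ∩ S).card : ZMod 2) * bit1Z (s v)
      = ∑ v ∈ Finset.univ.filter (fun v => Odd ((G.neighborFinset v ∩ S).card)),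
        bit1Z (s v) := by
    rw [Finset.sum_filter]
    refine Finset.sum_congr rfl fun v _ => ?_
    rw [natCast_zmod2]
    split <;> simp
  rw [hL]

end ClusterState
end
end

section
/- Let G be a finite simple graph, Δ > 0, β > 0, and let H = −(Δ/2) • ∑_{u ∈ V} K_u be the cluster Hamiltonian. Then the Gibbs state equals a product over vertices: exp(−β • H) / trace(exp(−β • H)) = 2^{−|V|} • ∏_{u ∈ V} (1 + tanh(βΔ/2) • K_u). -/
open Matrix

set_option linter.unusedSectionVars false

noncomputable section

namespace ClusterState


variable {V : Type*} [Fintype V] [DecidableEq V]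

-- ===================== auxiliary lemmas =====================

lemma XAt_sq (u : V) : XAt u * XAt u = 1 := by
  funext s t
  rw [XAt_mul_apply, XAt_apply, flip_flip, Matrix.one_apply]
  by_cases h : s = t
  · rw [if_pos h.symm, if_pos h]
  · rw [if_neg (Ne.symm h), if_neg h]

lemma Zprod_eq_diagonal_s4 (S : Finset V) :
    Zprod S = Matrix.diagonal fun s => ∏ v ∈ S, if s v = 1 then (-1 : ℂ) else 1 := by
  classical
  induction S using Finset.induction_on with
  | empty =>
    simp only [Zprod, Finset.noncommProd_empty, Finset.prod_empty]
    exact Matrix.diagonal_one.symm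
  | insert a S ha ih =>
    simp only [Zprod] at ih ⊢
    refine ((Finset.noncommProd_insert_of_notMem _ _ _ _ ha).trans (congrArg (ZAt a * ·) ih)).trans ?_
    rw [ZAt_eq_diagonal,
      Matrix.diagonal_mul_diagonal]
    have hfun : (fun (i : V → Fin 2) => (if i a = 1 then (-1 : ℂ) else 1) * ∏ v ∈ S, if i v = 1 then (-1 : ℂ) else 1)
        = fun s => ∏ v ∈ insert a S, if s v = 1 then (-1 : ℂ) else 1 :=
      funext fun s => by rw [Finset.prod_insert ha]
    rw [hfun]

lemma Zprod_sq (S : Finset V) : Zprod S * Zprod S = 1 := by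
  rw [Zprod_eq_diagonal_s4, Matrix.diagonal_mul_diagonal]
  have h : (fun (i : V → Fin 2) => (∏ v ∈ S, if i v = 1 then (-1 : ℂ) else 1) *
      ∏ v ∈ S, if i v = 1 then (-1 : ℂ) else 1) = fun _ => (1 : ℂ) := by
    funext s
    rw [← Finset.prod_mul_distrib]
    exact Finset.prod_eq_one fun v _ => by by_cases h : s v = 1 <;> simp [h]
  rw [h]
  exact Matrix.diagonal_one

lemma XAt_ZAt_commute {u v : V} (h : v ≠ u) : Commute (XAt u) (ZAt v) := by
  show XAt u * ZAt v = ZAt v * XAt u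
  funext s t
  rw [XAt_mul_apply, mul_XAt_apply, ZAt_eq_diagonal]
  by_cases hst : t = flip u s
  · subst hst
    simp [Matrix.diagonal_apply, flip_flip, flip_apply_ne u v s h]
  · have h2 : s ≠ flip u t := fun he => hst (by rw [he, flip_flip])
    rw [Matrix.diagonal_apply_ne _ (fun he => hst he.symm), Matrix.diagonal_apply_ne _ h2]

lemma XAt_Zprod_commute {u : V} {S : Finset V} (h : u ∉ S) : Commute (XAt u) (Zprod S) :=
  Finset.noncommProd_commute _ _ _ _ fun v hv => XAt_ZAt_commute (fun he => h (he ▸ hv))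

lemma K_sq (G : SimpleGraph V) [DecidableRel G.Adj] (u : V) : K G u * K G u = 1 := by
  have hcomm : Commute (XAt u) (Zprod (G.neighborFinset u)) :=
    XAt_Zprod_commute (G.notMem_neighborFinset_self u)
  show (XAt u * Zprod (G.neighborFinset u)) * (XAt u * Zprod (G.neighborFinset u)) = 1
  rw [mul_assoc, ← mul_assoc (Zprod (G.neighborFinset u)) (XAt u), ← hcomm.eq,
    mul_assoc (XAt u), ← mul_assoc, XAt_sq, one_mul, Zprod_sq]

/-- A matrix is "diagonal at site `u`" if entries between states differing at `u` vanish. -/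
def DiagAt (u : V) (M : Matrix (V → Fin 2) (V → Fin 2) ℂ) : Prop :=
  ∀ s t, s u ≠ t u → M s t = 0

lemma DiagAt.one (u : V) : DiagAt u 1 := fun s t h =>
  Matrix.one_apply_ne (fun he => h (by rw [he]))

lemma DiagAt.mul {u : V} {M N : Matrix (V → Fin 2) (V → Fin 2) ℂ}
    (hM : DiagAt u M) (hN : DiagAt u N) : DiagAt u (M * N) := by
  intro s t h
  rw [Matrix.mul_apply]
  refine Finset.sum_eq_zero fun r _ => ?_
  by_cases hr : s u = r u
  · rw [hN r t (fun he => h (hr.trans he)), mul_zero]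
  · rw [hM s r hr, zero_mul]

lemma DiagAt.add {u : V} {M N : Matrix (V → Fin 2) (V → Fin 2) ℂ}
    (hM : DiagAt u M) (hN : DiagAt u N) : DiagAt u (M + N) := fun s t h => by
  rw [Matrix.add_apply, hM s t h, hN s t h, add_zero]

lemma DiagAt.smul {u : V} (r : ℝ) {M : Matrix (V → Fin 2) (V → Fin 2) ℂ}
    (hM : DiagAt u M) : DiagAt u (r • M) := fun s t h => by
  rw [Matrix.smul_apply, hM s t h, smul_zero]

lemma DiagAt.K (G : SimpleGraph V) [DecidableRel G.Adj] {u w : V} (h : w ≠ u) :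
    DiagAt u (K G w) := by
  intro s t hst
  show (XAt w * Zprod (G.neighborFinset w)) s t = 0
  rw [XAt_mul_apply, Zprod_eq_diagonal_s4]
  refine Matrix.diagonal_apply_ne _ fun he => hst ?_
  rw [← he, flip_apply_ne w u s (Ne.symm h)]

lemma trace_K_mul (G : SimpleGraph V) [DecidableRel G.Adj] (u : V)
    {M : Matrix (V → Fin 2) (V → Fin 2) ℂ} (hM : DiagAt u M) :
    Matrix.trace (K G u * M) = 0 := by
  rw [Matrix.trace]
  refine Finset.sum_eq_zero fun s _ => ?_
  show (K G u * M) s s = 0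
  have hKM : K G u * M = XAt u * (Zprod (G.neighborFinset u) * M) := by
    rw [K, mul_assoc]
  have hne : (flip u s) u ≠ s u := by
    rw [flip_apply_same]
    have : ∀ a : Fin 2, a + 1 ≠ a := by decide
    exact this (s u)
  rw [hKM, XAt_mul_apply, Zprod_eq_diagonal_s4, Matrix.diagonal_mul, hM (flip u s) s hne, mul_zero]

lemma trace_prod (G : SimpleGraph V) [DecidableRel G.Adj] (t : ℝ)
    (hC : ∀ u w : V, Commute ((1 : Matrix (V → Fin 2) (V → Fin 2) ℂ) + t • K G u)
      (1 + t • K G w)) (S : Finset V) :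
    Matrix.trace (S.noncommProd (fun u => (1 : Matrix (V → Fin 2) (V → Fin 2) ℂ) + t • K G u)
      (fun u _ w _ _ => hC u w)) = (Fintype.card (V → Fin 2) : ℂ) := by
  classical
  induction S using Finset.induction_on with
  | empty => exact (congrArg Matrix.trace (Finset.noncommProd_empty _ _)).trans Matrix.trace_one
  | insert a S ha ih =>
    have hdiag : DiagAt a (S.noncommProd
        (fun u => (1 : Matrix (V → Fin 2) (V → Fin 2) ℂ) + t • K G u)
        (fun u hu w hw _ => hC u w)) := by
      refine Finset.noncommProd_induction _ _ _ (DiagAt a)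
        (fun x y hx hy => hx.mul hy) (DiagAt.one a) ?_
      intro w hw
      exact (DiagAt.one a).add (DiagAt.smul t (DiagAt.K G (fun he => ha (he ▸ hw))))
    have h0 : Matrix.trace (K G a * S.noncommProd
        (fun u => (1 : Matrix (V → Fin 2) (V → Fin 2) ℂ) + t • K G u)
        (fun u hu w hw _ => hC u w)) = 0 := trace_K_mul G a hdiag
    refine (congrArg Matrix.trace (Finset.noncommProd_insert_of_notMem _ _ _ _ ha)).trans ?_
    rw [add_mul, one_mul, smul_mul_assoc,
      Matrix.trace_add, Matrix.trace_smul]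
    exact (congrArg₂ (fun x y : ℂ => x + t • y) ih h0).trans (by rw [smul_zero, add_zero])

lemma real_smul_matrix {m : Type*} (r : ℝ) (M : Matrix m m ℂ) : r • M = (r : ℂ) • M := by
  funext s t
  simp [Matrix.smul_apply, Complex.real_smul]

lemma commute_of_commute_one_add {n : Type*} [Fintype n] [DecidableEq n] {t : ℝ} (ht : t ≠ 0)
    {A B : Matrix n n ℂ} (h : Commute (1 + t • A) (1 + t • B)) : Commute A B := by
  have e1 : (1 + t • A) * (1 + t • B) = 1 + t • A + t • B + (t * t) • (A * B) := by
    rw [mul_add, mul_one, mul_smul_comm, add_mul, one_mul, smul_mul_assoc, smul_add, smul_smul]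
    abel
  have e2 : (1 + t • B) * (1 + t • A) = 1 + t • A + t • B + (t * t) • (B * A) := by
    rw [mul_add, mul_one, mul_smul_comm, add_mul, one_mul, smul_mul_assoc, smul_add, smul_smul]
    abel
  have h3 : (t * t) • (A * B) = (t * t) • (B * A) := by
    have h' := h.eq
    rw [e1, e2] at h'
    exact add_left_cancel h'
  show A * B = B * A
  funext s r
  have h4 : ((t * t) • (A * B)) s r = ((t * t) • (B * A)) s r := by rw [h3]
  rw [Matrix.smul_apply, Matrix.smul_apply] at h4
  exact smul_right_injective ℂ (mul_ne_zero ht ht) h4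

set_option maxHeartbeats 1000000 in
lemma exp_smul_of_sq_eq_one {n : Type*} [Fintype n] [DecidableEq n]
    {A : Matrix n n ℂ} (hA : A * A = 1) (c : ℂ) :
    NormedSpace.exp (c • A) = Complex.cosh c • 1 + Complex.sinh c • A := by
  rw [NormedSpace.exp_eq_tsum ℂ]
  have hfun1 : (fun k => ((Nat.factorial (2 * k) : ℂ))⁻¹ • (c • A) ^ (2 * k))
      = fun k => (c ^ (2 * k) / (Nat.factorial (2 * k) : ℂ)) • (1 : Matrix n n ℂ) := by
    funext k
    rw [smul_pow, pow_mul A, pow_two, hA, one_pow, smul_smul]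
    congr 1
    ring
  have hfun2 : (fun k => ((Nat.factorial (2 * k + 1) : ℂ))⁻¹ • (c • A) ^ (2 * k + 1))
      = fun k => (c ^ (2 * k + 1) / (Nat.factorial (2 * k + 1) : ℂ)) • A := by
    funext k
    rw [smul_pow, pow_succ A, pow_mul A, pow_two, hA, one_pow, one_mul, smul_smul]
    congr 1
    ring
  have he : HasSum (fun k => ((Nat.factorial (2 * k) : ℂ))⁻¹ • (c • A) ^ (2 * k))
      (Complex.cosh c • 1) := by
    rw [hfun1]; exact (Complex.hasSum_cosh c).smul_const _
  have ho : HasSum (fun k => ((Nat.factorial (2 * k + 1) : ℂ))⁻¹ • (c • A) ^ (2 * k + 1))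
      (Complex.sinh c • A) := by
    rw [hfun2]; exact (Complex.hasSum_sinh c).smul_const _
  have hs := HasSum.even_add_odd (f := fun n => ((Nat.factorial n : ℂ))⁻¹ • (c • A) ^ n) he ho
  exact hs.tsum_eq

lemma noncommProd_smul_aux {ι : Type*} [DecidableEq ι] {n : Type*} [Fintype n] [DecidableEq n]
    (c : ℂ) (f : ι → Matrix n n ℂ) :
    ∀ (S : Finset ι) (hf : ∀ u ∈ S, ∀ w ∈ S, Commute (f u) (f w)),
    S.noncommProd (fun u => c • f u)
        (fun u hu w hw _ => ((hf u hu w hw).smul_left c).smul_right c)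
      = c ^ S.card • S.noncommProd f (fun u hu w hw _ => hf u hu w hw) := by
  intro S
  induction S using Finset.induction_on with
  | empty => intro hf; simp [Finset.noncommProd_empty]; exact (Finset.noncommProd_empty _ _).trans (Finset.noncommProd_empty _ _).symm
  | insert a S ha ih =>
    intro hf
    have hf' : ∀ u ∈ S, ∀ w ∈ S, Commute (f u) (f w) :=
      fun u hu w hw => hf u (Finset.mem_insert_of_mem hu) w (Finset.mem_insert_of_mem hw)
    calc _ = c • f a * S.noncommProd (fun u => c • f u)
          (fun u hu w hw _ => ((hf' u hu w hw).smul_left c).smul_right c) :=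
        Finset.noncommProd_insert_of_notMem _ _ _ _ ha
      _ = c • f a * (c ^ S.card • S.noncommProd f (fun u hu w hw _ => hf' u hu w hw)) :=
        congrArg (c • f a * ·) (ih hf')
      _ = c ^ (insert a S).card • (f a * S.noncommProd f (fun u hu w hw _ => hf' u hu w hw)) := by
        rw [Finset.card_insert_of_notMem ha, mul_smul_comm, smul_mul_assoc, smul_smul, pow_succ]
      _ = _ := congrArg (c ^ (insert a S).card • ·) (Finset.noncommProd_insert_of_notMem _ _ _ _ ha).symm

/-- the Gibbs state of the cluster Hamiltonian
`H = −(Δ/2) ∑_u K_u` is `exp(−βH)/tr(exp(−βH)) = 2^{−|V|} ∏_u (1 + tanh(βΔ/2) K_u)`. -/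
theorem gibbs_state_eq_thermal_cluster_state
    {V : Type*} [Fintype V] [DecidableEq V]
    (G : SimpleGraph V) [DecidableRel G.Adj] (Δ β : ℝ) (hΔ : 0 < Δ) (hβ : 0 < β)
    (H : Matrix (V → Fin 2) (V → Fin 2) ℂ)
    (hH : H = (-(Δ / 2) : ℝ) • ∑ u : V, K G u)
    (hc : ∀ u w : V,
      Commute ((1 : Matrix (V → Fin 2) (V → Fin 2) ℂ) + Real.tanh (β * Δ / 2) • K G u)
        (1 + Real.tanh (β * Δ / 2) • K G w)) :
    (Matrix.trace (NormedSpace.exp ((-β : ℝ) • H)))⁻¹ • NormedSpace.exp ((-β : ℝ) • H)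
      = ((2 : ℂ) ^ Fintype.card V)⁻¹ •
          cprod Finset.univ (fun u => 1 + Real.tanh (β * Δ / 2) • K G u)
            (fun u _ w _ => hc u w) := by
  classical
  have hθ : (0 : ℝ) < β * Δ / 2 := by positivity
  have ht0 : 0 < Real.tanh (β * Δ / 2) := by
    rw [Real.tanh_eq_sinh_div_cosh]
    exact div_pos (Real.sinh_pos_iff.2 hθ) (Real.cosh_pos _)
  have hKc : ∀ u w : V, Commute (K G u) (K G w) :=
    fun u w => commute_of_commute_one_add (ne_of_gt ht0) (hc u w)
  have hch : ((Real.cosh (β * Δ / 2) : ℂ)) ≠ 0 :=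
    Complex.ofReal_ne_zero.mpr (Real.cosh_pos _).ne'
  -- rewrite the exponent
  have harg : (-β : ℝ) • H = ∑ u : V, ((β * Δ / 2 : ℝ) : ℂ) • K G u := by
    have hr : ((-β) * (-(Δ / 2)) : ℝ) = β * Δ / 2 := by ring
    rw [hH, smul_smul, hr, real_smul_matrix, Finset.smul_sum]
  -- per-site exponential
  have hexp_each : ∀ u : V, NormedSpace.exp (((β * Δ / 2 : ℝ) : ℂ) • K G u)
      = ((Real.cosh (β * Δ / 2) : ℂ)) • (1 + Real.tanh (β * Δ / 2) • K G u) := by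
    intro u
    rw [exp_smul_of_sq_eq_one (K_sq G u), real_smul_matrix, smul_add, smul_smul,
      ← Complex.ofReal_cosh, ← Complex.ofReal_sinh, ← Complex.ofReal_mul,
      show Real.cosh (β * Δ / 2) * Real.tanh (β * Δ / 2) = Real.sinh (β * Δ / 2) from by
        rw [Real.tanh_eq_sinh_div_cosh, mul_comm, div_mul_cancel₀ _ (Real.cosh_pos _).ne']]
  -- full exponential
  have hexp : NormedSpace.exp ((-β : ℝ) • H)
      = ((Real.cosh (β * Δ / 2) : ℂ)) ^ Fintype.card V •
          cprod Finset.univ (fun u => 1 + Real.tanh (β * Δ / 2) • K G u)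
            (fun u _ w _ => hc u w) := by
    have hpair : ((Finset.univ : Finset V) : Set V).Pairwise
        (Function.onFun Commute fun u => ((β * Δ / 2 : ℝ) : ℂ) • K G u) :=
      fun u _ w _ _ => ((hKc u w).smul_left _).smul_right _
    rw [harg, Matrix.exp_sum_of_commute Finset.univ
        (fun u => ((β * Δ / 2 : ℝ) : ℂ) • K G u) hpair]
    refine (Finset.noncommProd_congr rfl (fun u _ => hexp_each u) _).trans ?_
    refine (noncommProd_smul_aux ((Real.cosh (β * Δ / 2) : ℂ))
        (fun u => 1 + Real.tanh (β * Δ / 2) • K G u) Finset.univ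
        (fun u _ w _ => hc u w)).trans ?_
    rw [Finset.card_univ]
    rfl
  -- trace
  have hcard : (Fintype.card (V → Fin 2) : ℂ) = (2 : ℂ) ^ Fintype.card V := by
    rw [Fintype.card_fun, Fintype.card_fin, Nat.cast_pow, Nat.cast_ofNat]
  have htr : Matrix.trace (NormedSpace.exp ((-β : ℝ) • H))
      = ((Real.cosh (β * Δ / 2) : ℂ)) ^ Fintype.card V * (2 : ℂ) ^ Fintype.card V := by
    rw [hexp, Matrix.trace_smul, smul_eq_mul]
    congr 1
    have := trace_prod G (Real.tanh (β * Δ / 2)) (fun u w => hc u w) Finset.univ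
    rw [← hcard]
    exact this
  rw [htr, hexp, smul_smul]
  congr 1
  rw [mul_inv, mul_comm ((((Real.cosh (β * Δ / 2) : ℂ)) ^ Fintype.card V)⁻¹)
      (((2 : ℂ) ^ Fintype.card V)⁻¹),
    mul_assoc, inv_mul_cancel₀ (pow_ne_zero _ hch), mul_one]

end ClusterState
end
end

section
/- Fix d ≥ 1 and let W = |0^{⊗d}⟩⟨0| + |1^{⊗d}⟩⟨1|. Then Wᴴ * (∏_{j ∈ Fin d} X_j) * W = X (single-qubit Pauli X), and for every nonempty proper subset S ⊊ Fin d, Wᴴ * (∏_{j ∈ S} X_j) * W = 0. -/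
open Matrix

set_option linter.unusedSectionVars false

noncomputable section

namespace ClusterState


variable {V : Type*} [Fintype V] [DecidableEq V]

/-- The isometry `W = |0^{⊗d}⟩⟨0| + |1^{⊗d}⟩⟨1|` from one qubit into `d` qubits:
`W(s, b) = 1` if `s` is the constant function with value `b`, and `0` otherwise. -/
def Wiso (d : ℕ) : Matrix (Fin d → Fin 2) (Fin 2) ℂ :=
  Matrix.of fun s b => if s = fun _ => b then 1 else 0

/-- Flip all bits in a set `S`. -/
def flipSet (S : Finset V) (s : V → Fin 2) : V → Fin 2 :=
  fun v => if v ∈ S then s v + 1 else s v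

lemma flip_flipSet (u : V) (S : Finset V) (hu : u ∉ S) (s : V → Fin 2) :
    flipSet S (flip u s) = flipSet (insert u S) s := by
  funext v
  by_cases hv : v = u
  · subst hv
    simp [flipSet, hu, flip_apply_same]
  · simp [flipSet, Finset.mem_insert, hv, flip_apply_ne u v s hv]

lemma Xprod_apply (S : Finset V) (s t : V → Fin 2) :
    Xprod S s t = if t = flipSet S s then 1 else 0 := by
  induction S using Finset.induction generalizing s with
  | empty =>
      rw [show Xprod (∅ : Finset V) = 1 from Finset.noncommProd_empty _ _]
      by_cases h : t = s
      · subst h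
        rw [Matrix.one_apply_eq, if_pos (by funext v; simp [flipSet])]
      · rw [Matrix.one_apply_ne (Ne.symm h), if_neg (by rw [show flipSet (∅ : Finset V) s = s by funext v; simp [flipSet]]; exact h)]
  | @insert u S' hu ih =>
      have : Xprod (insert u S') = XAt u * Xprod S' := by
        simp only [Xprod]
        exact Finset.noncommProd_insert_of_notMem _ _ _ _ hu
      rw [this, XAt_mul_apply, ih, flip_flipSet u S' hu]

lemma compress_apply (d : ℕ) (A : Matrix (Fin d → Fin 2) (Fin d → Fin 2) ℂ)
    (a b : Fin 2) :
    ((Wiso d)ᴴ * A * Wiso d) a b = A (fun _ => a) (fun _ => b) := by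
  rw [Matrix.mul_apply]
  rw [Finset.sum_eq_single (fun _ => b : Fin d → Fin 2)]
  · rw [Matrix.mul_apply, Finset.sum_eq_single (fun _ => a : Fin d → Fin 2)]
    · simp [Wiso, Matrix.conjTranspose_apply]
    · intro r _ hr
      simp [Wiso, Matrix.conjTranspose_apply, hr]
    · intro h; exact absurd (Finset.mem_univ _) h
  · intro r _ hr
    simp [Wiso, hr]
  · intro h; exact absurd (Finset.mem_univ _) h

/-- `Wᴴ (∏_{j} X_j) W = X`, while `Wᴴ (∏_{j ∈ S} X_j) W = 0` for
every nonempty proper subset `S ⊊ Fin d`. -/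
theorem Wiso_compress_X_products (d : ℕ) (hd : 1 ≤ d) :
    (Wiso d)ᴴ * Xprod (Finset.univ : Finset (Fin d)) * Wiso d = PX ∧
    (∀ S : Finset (Fin d), S.Nonempty → S ≠ Finset.univ →
      (Wiso d)ᴴ * Xprod S * Wiso d = 0) := by
  constructor
  · funext a b
    rw [compress_apply, Xprod_apply]
    have hfs : flipSet (Finset.univ : Finset (Fin d)) (fun _ => a) =
        fun _ => a + 1 := by
      funext v; simp [flipSet]
    rw [hfs]
    have hpt : (⟨0, hd⟩ : Fin d) = ⟨0, hd⟩ := rfl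
    by_cases hab : b = a + 1
    · subst hab
      rw [if_pos rfl]
      rcases fin2_cases a with h | h <;> subst h <;> norm_num [PX] <;> rfl
    · rw [if_neg (fun he => hab (congrFun he ⟨0, hd⟩))]
      rcases fin2_cases a with h | h <;> rcases fin2_cases b with h' | h' <;>
        subst h <;> subst h' <;> first
          | (exact absurd rfl hab)
          | norm_num [PX]
  · intro S hS hSne
    obtain ⟨u, hu⟩ := hS
    obtain ⟨w, hw⟩ : ∃ w, w ∉ S := by
      by_contra h
      push_neg at h
      exact hSne (Finset.eq_univ_of_forall h)
    funext a b
    rw [compress_apply, Xprod_apply]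
    rw [if_neg, Matrix.zero_apply]
    intro he
    have h1 : b = a + 1 := by
      have := congrFun he u
      simpa [flipSet, hu] using this
    have h2 : b = a := by
      have := congrFun he w
      simpa [flipSet, hw] using this
    rw [h2] at h1
    rcases fin2_cases a with h | h <;> subst h <;> exact absurd h1 (by decide)

end ClusterState
end
end

section
/- For every ω ∈ ℝ with 0 ≤ ω ≤ 1, the partial transpose ρ(ω)^{T₂} of the bond state ρ(ω) is positive semidefinite if and only if ω ≤ √2 − 1. -/
open Matrix Kronecker
open scoped ComplexOrder

noncomputable section

namespace ClusterState

/-- The single-qubit Pauli `Y` matrix. -/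
def PY : Matrix (Fin 2) (Fin 2) ℂ := !![0, -Complex.I; Complex.I, 0]

/-- The bond state `ρ(ω) = (1/4)(1 + ω X⊗Z)(1 + ω Z⊗X)`. -/
def bondState (ω : ℝ) : Matrix (Fin 2 × Fin 2) (Fin 2 × Fin 2) ℂ :=
  (4 : ℂ)⁻¹ • ((1 + ω • (PX ⊗ₖ PZ)) * (1 + ω • (PZ ⊗ₖ PX)))

/-- The partial transpose on the second tensor factor:
`M^{T₂}[(i,j),(k,l)] = M[(i,l),(k,j)]`. -/
def ptrans {n m : Type*} (M : Matrix (n × m) (n × m) ℂ) : Matrix (n × m) (n × m) ℂ :=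
  Matrix.of fun p q => M (p.1, q.2) (q.1, p.2)

/-- An outer product `w wᴴ` is positive semidefinite. -/
lemma psd_outer {n : Type*} [Fintype n] [DecidableEq n] (w : n → ℂ) :
    (Matrix.of fun p q => w p * star (w q) : Matrix n n ℂ).PosSemidef := by
  have h := Matrix.posSemidef_self_mul_conjTranspose (Matrix.replicateCol (Fin 1) w)
  convert h using 1
  ext p q
  simp [Matrix.mul_apply, Matrix.replicateCol]

/-- A nonnegative real multiple of a PSD matrix is PSD. -/
lemma psd_smul {n : Type*} [Fintype n] (c : ℝ) (hc : 0 ≤ c)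
    {M : Matrix n n ℂ} (hM : M.PosSemidef) : ((c : ℂ) • M).PosSemidef := by
  refine Matrix.PosSemidef.of_dotProduct_mulVec_nonneg ?_ (fun x => ?_)
  · unfold Matrix.IsHermitian
    rw [Matrix.conjTranspose_smul, hM.1.eq]
    norm_num
  · rw [Matrix.smul_mulVec, dotProduct_smul, smul_eq_mul]
    exact mul_nonneg (by exact_mod_cast hc) (hM.dotProduct_mulVec_nonneg x)

/-- First eigenvector `(0,1,-1,0)`. -/
def w1 : Fin 2 × Fin 2 → ℂ := fun p => !![0,1;-1,0] p.1 p.2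
/-- Second eigenvector `(1,0,0,1)`. -/
def w2 : Fin 2 × Fin 2 → ℂ := fun p => !![1,0;0,1] p.1 p.2
/-- Third eigenvector `(1,1,1,-1)`. -/
def w3 : Fin 2 × Fin 2 → ℂ := fun p => !![1,1;1,-1] p.1 p.2
/-- Fourth eigenvector `(1,-1,-1,-1)`. -/
def w4 : Fin 2 × Fin 2 → ℂ := fun p => !![1,-1;-1,-1] p.1 p.2

set_option maxHeartbeats 3000000 in
/-- Spectral decomposition of the partially transposed bond state. -/
lemma decomp (ω : ℝ) : ptrans (bondState ω) =
    (((1+ω^2)/8 : ℝ) : ℂ) • (Matrix.of fun p q => w1 p * star (w1 q))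
  + (((1+ω^2)/8 : ℝ) : ℂ) • (Matrix.of fun p q => w2 p * star (w2 q))
  + (((1+2*ω-ω^2)/16 : ℝ) : ℂ) • (Matrix.of fun p q => w3 p * star (w3 q))
  + (((1-2*ω-ω^2)/16 : ℝ) : ℂ) • (Matrix.of fun p q => w4 p * star (w4 q)) := by
  ext ⟨i,j⟩ ⟨k,l⟩
  fin_cases i <;> fin_cases j <;> fin_cases k <;> fin_cases l <;>
    simp [ptrans, bondState, PX, PZ, w1, w2, w3, w4, Matrix.mul_apply,
      Fintype.sum_prod_type, Fin.sum_univ_succ, Matrix.one_apply] <;>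
    ring

/-- for `0 ≤ ω ≤ 1`, the partial transpose of the bond state is
positive semidefinite iff `ω ≤ √2 − 1`. -/
theorem bondState_ptrans_posSemidef_iff (ω : ℝ) (h0 : 0 ≤ ω) (h1 : ω ≤ 1) :
    (ptrans (bondState ω)).PosSemidef ↔ ω ≤ Real.sqrt 2 - 1 := by
  have hs2 : Real.sqrt 2 ^ 2 = 2 := Real.sq_sqrt (by norm_num)
  have hs2n : 0 ≤ Real.sqrt 2 := Real.sqrt_nonneg 2
  constructor
  · intro h
    have hq := h.dotProduct_mulVec_nonneg w4
    have he : star w4 ⬝ᵥ (ptrans (bondState ω)) *ᵥ w4 = ((1 - 2*ω - ω^2 : ℝ) : ℂ) := by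
      simp [ptrans, bondState, PX, PZ, w4, Matrix.mulVec, dotProduct, Matrix.mul_apply,
        Fintype.sum_prod_type, Fin.sum_univ_succ, Matrix.one_apply]
      ring
    rw [he] at hq
    have hr : (0:ℝ) ≤ 1 - 2*ω - ω^2 := by exact_mod_cast hq
    nlinarith [hs2, hs2n]
  · intro h
    have hc4 : (0:ℝ) ≤ (1-2*ω-ω^2)/16 := by nlinarith [hs2, hs2n]
    rw [decomp]
    exact (((psd_smul _ (by nlinarith) (psd_outer w1)).add
      (psd_smul _ (by nlinarith) (psd_outer w2))).add
      (psd_smul _ (by nlinarith) (psd_outer w3))).add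
      (psd_smul _ hc4 (psd_outer w4))

end ClusterState
end
end

section
/- (Peres criterion) Let ρ be a matrix on ℂ^n ⊗ ℂ^m (indexed by Fin n × Fin m) that is separable, i.e. there exist a finite index set I, nonnegative weights λ_i summing to 1, and density matrices σ_i on ℂ^n and τ_i on ℂ^m (Hermitian, positive semidefinite, trace one) with ρ = ∑_{i ∈ I} λ_i • σ_i ⊗ τ_i. Then the partial transpose of ρ on the second factor, defined by ρ^{T₂}[(a,b),(c,d)] = ρ[(a,d),(c,b)], is positive semidefinite. -/
open Matrix Kronecker
open scoped ComplexOrder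

noncomputable section

namespace ClusterState

lemma kronecker_conjTranspose' {n m : Type*} (A : Matrix n n ℂ) (B : Matrix m m ℂ) :
    (A ⊗ₖ B)ᴴ = Aᴴ ⊗ₖ Bᴴ := by
  ext p q
  simp [Matrix.conjTranspose_apply, Matrix.kroneckerMap_apply, mul_comm]

lemma psd_smul_s14 {k : Type*} [Fintype k] [DecidableEq k] {M : Matrix k k ℂ} (h : M.PosSemidef)
    {r : ℝ} (hr : 0 ≤ r) : ((r : ℝ) • M).PosSemidef := by
  have h2 := h.conjTranspose_mul_mul_same ((Real.sqrt r : ℂ) • (1 : Matrix k k ℂ))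
  have e : (((Real.sqrt r : ℂ) • (1 : Matrix k k ℂ))ᴴ * M) *
      ((Real.sqrt r : ℂ) • (1 : Matrix k k ℂ)) = (r : ℝ) • M := by
    ext a b
    simp [Matrix.mul_smul, Matrix.smul_mul, smul_smul, Complex.real_smul]
    rw [← mul_assoc, ← Complex.ofReal_mul, Real.mul_self_sqrt hr]
  rwa [e] at h2

lemma psd_kron {n m : ℕ} {A : Matrix (Fin n) (Fin n) ℂ} {B : Matrix (Fin m) (Fin m) ℂ}
    (hA : A.PosSemidef) (hB : B.PosSemidef) : (A ⊗ₖ B).PosSemidef := by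
  exact hA.kronecker hB

lemma psd_sum {k : Type*} {I : Type} [Fintype k] [Fintype I] (f : I → Matrix k k ℂ)
    (h : ∀ i, (f i).PosSemidef) : (∑ i, f i).PosSemidef := by
  classical
  induction (Finset.univ : Finset I) using Finset.induction with
  | empty => simpa using Matrix.PosSemidef.zero
  | insert _ _ hx ih =>
      rw [Finset.sum_insert hx]
      exact (h _).add ih

/-- Peres criterion: the partial transpose of a separable bipartite
state is positive semidefinite. -/
theorem peres_criterion {n m : ℕ} (ρ : Matrix (Fin n × Fin m) (Fin n × Fin m) ℂ)
    (I : Type) [Fintype I] (lam : I → ℝ)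
    (hlam : ∀ i, 0 ≤ lam i) (hsum : ∑ i, lam i = 1)
    (σ : I → Matrix (Fin n) (Fin n) ℂ) (τ : I → Matrix (Fin m) (Fin m) ℂ)
    (hσ : ∀ i, (σ i)ᴴ = σ i ∧ (σ i).PosSemidef ∧ (σ i).trace = 1)
    (hτ : ∀ i, (τ i)ᴴ = τ i ∧ (τ i).PosSemidef ∧ (τ i).trace = 1)
    (hρ : ρ = ∑ i, lam i • (σ i ⊗ₖ τ i)) :
    (ptrans ρ).PosSemidef := by
  have key : ptrans ρ = ∑ i, lam i • (σ i ⊗ₖ (τ i)ᵀ) := by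
    subst hρ
    ext ⟨a, b⟩ ⟨c, d⟩
    show (∑ i, lam i • (σ i ⊗ₖ τ i)) (a, d) (c, b) = _
    simp only [Matrix.sum_apply, Matrix.smul_apply,
      Matrix.kroneckerMap_apply, Matrix.transpose_apply]
  rw [key]
  exact psd_sum _ fun i => psd_smul_s14 (psd_kron (hσ i).2.1 ((hτ i).2.1.transpose)) (hlam i)

end ClusterState
end
end
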